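/- Let ρ_d = Σ_E |⟨E|Ψ₀⟩|² |E⟩⟨E| and let {|z⟩} be an orthonormal basis with p_avg(z) = ⟨z|ρ_d|z⟩ > 0 for all z. Define D_β⁻¹ = Σ_{z,E} |⟨z|E⟩⟨E|Ψ₀⟩|⁴ / p_avg(z). Then tr(ρ_d²) = Σ_E |⟨Ψ₀|E⟩|⁴ ≤ D_β⁻¹. -/

import Mathlib

open scoped BigOperators

/-- `p_avg(z) = ⟨z|ρ_d|z⟩ = ∑_E |⟨E|Ψ₀⟩|² |⟨z|E⟩|²`. -/
noncomputable def pavgZ {D : ℕ} (v w : Fin D → EuclideanSpace ℂ (Fin D))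
    (Ψ₀ : EuclideanSpace ℂ (Fin D)) (z : Fin D) : ℝ :=
  ∑ j, ‖(inner ℂ (v j) Ψ₀ : ℂ)‖ ^ 2 * ‖(inner ℂ (w z) (v j) : ℂ)‖ ^ 2

lemma parseval_aux {D : ℕ} (v : Fin D → EuclideanSpace ℂ (Fin D))
    (hv : Orthonormal ℂ v) (x : EuclideanSpace ℂ (Fin D)) :
    ∑ j, ‖(inner ℂ (v j) x : ℂ)‖ ^ 2 = ‖x‖ ^ 2 := by
  have hcard : Fintype.card (Fin D) = Module.finrank ℂ (EuclideanSpace ℂ (Fin D)) := by simp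
  have hspan : ⊤ ≤ Submodule.span ℂ (Set.range v) :=
    (hv.linearIndependent.span_eq_top_of_card_eq_finrank' hcard).ge
  let b : OrthonormalBasis (Fin D) ℂ (EuclideanSpace ℂ (Fin D)) := OrthonormalBasis.mk hv hspan
  have hb : ⇑b = v := OrthonormalBasis.coe_mk hv hspan
  have h := b.sum_inner_mul_inner x x
  rw [hb] at h
  have h2 : ∀ j, (inner ℂ x (v j) : ℂ) * inner ℂ (v j) x
      = ((‖(inner ℂ (v j) x : ℂ)‖)^2 : ℝ) := by
    intro j
    rw [← inner_conj_symm x (v j), Complex.sq_norm, Complex.normSq_eq_conj_mul_self]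
  rw [Finset.sum_congr rfl (fun j _ => h2 j), inner_self_eq_norm_sq_to_K] at h
  simpa [← Complex.ofReal_pow] using congrArg Complex.re h

/-- The purity of the diagonal ensemble is bounded by the inverse effective dimension:
`tr(ρ_d²) = ∑_E |⟨Ψ₀|E⟩|⁴ ≤ D_β⁻¹ = ∑_{z,E} |⟨z|E⟩⟨E|Ψ₀⟩|⁴ / p_avg(z)`. -/
theorem purity_le_inverse_effective_dimension {D : ℕ}
    (v w : Fin D → EuclideanSpace ℂ (Fin D))
    (hv : Orthonormal ℂ v) (hw : Orthonormal ℂ w)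
    (Ψ₀ : EuclideanSpace ℂ (Fin D)) (hΨ : ‖Ψ₀‖ = 1)
    (hpos : ∀ z, 0 < pavgZ v w Ψ₀ z) :
    ∑ j, ‖(inner ℂ (v j) Ψ₀ : ℂ)‖ ^ 4 ≤
      ∑ z, (∑ j, ‖(inner ℂ (w z) (v j) : ℂ) * (inner ℂ (v j) Ψ₀ : ℂ)‖ ^ 4) /
        pavgZ v w Ψ₀ z := by
  set c : Fin D → ℝ := fun j => ‖(inner ℂ (v j) Ψ₀ : ℂ)‖^2 with hc_def
  set a : Fin D → Fin D → ℝ := fun z j => ‖(inner ℂ (w z) (v j) : ℂ)‖^2 with ha_def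
  have hc : ∑ j, c j = 1 := by
    rw [hc_def]; simpa [hΨ] using parseval_aux v hv Ψ₀
  have ha : ∀ j, ∑ z, a z j = 1 := by
    intro j
    have := parseval_aux w hw (v j)
    rw [hv.1 j] at this
    simpa [ha_def] using this
  have hp : ∀ z, pavgZ v w Ψ₀ z = ∑ j, c j * a z j := fun z => rfl
  have hsump : ∑ z, pavgZ v w Ψ₀ z = 1 := by
    simp_rw [hp]
    rw [Finset.sum_comm]
    simp_rw [← Finset.mul_sum]
    simp [ha, hc]
  have hnum : ∀ z j, ‖(inner ℂ (w z) (v j) : ℂ) * (inner ℂ (v j) Ψ₀ : ℂ)‖ ^ 4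
      = (a z j * c j)^2 := by
    intro z j
    rw [norm_mul, ha_def, hc_def]
    ring
  calc ∑ j, ‖(inner ℂ (v j) Ψ₀ : ℂ)‖ ^ 4
      = ∑ j, (∑ z, a z j * c j)^2 / (∑ z, pavgZ v w Ψ₀ z) := by
        rw [hsump]
        refine Finset.sum_congr rfl fun j _ => ?_
        rw [← Finset.sum_mul, ha j, one_mul, div_one, hc_def]
        ring
    _ ≤ ∑ j, ∑ z, (a z j * c j)^2 / pavgZ v w Ψ₀ z :=
        Finset.sum_le_sum fun j _ =>
          Finset.sq_sum_div_le_sum_sq_div Finset.univ (fun z => a z j * c j)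
            (fun z _ => hpos z)
    _ = ∑ z, (∑ j, ‖(inner ℂ (w z) (v j) : ℂ) * (inner ℂ (v j) Ψ₀ : ℂ)‖ ^ 4) /
        pavgZ v w Ψ₀ z := by
        rw [Finset.sum_comm]
        refine Finset.sum_congr rfl fun z _ => ?_
        rw [Finset.sum_div]
        exact Finset.sum_congr rfl fun j _ => by rw [hnum]
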